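/- U(n,ℂ) is a maximal compact subgroup of GL(n,ℂ): for every n ≥ 1, if G is a subgroup of GL(n,ℂ) whose underlying set of matrices is compact (in the topology induced from the space of n×n complex matrices) and G contains every unitary matrix, then G consists exactly of the unitary matrices. -/

import Mathlib

open Matrix

/-- `U(n,ℂ)` is a maximal compact subgroup of `GL(n,ℂ)`: if `G` is a subgroup
of `GL(n,ℂ)` whose underlying set of matrices is compact (in the topology
induced from the space of `n × n` complex matrices) and `G` contains every
unitary matrix, then `G` consists exactly of the unitary matrices. -/
theorem unitaryGroup_maximal_compact (n : ℕ) (hn : 1 ≤ n)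
    (G : Subgroup (GL (Fin n) ℂ))
    (hcompact : IsCompact
      ((fun g : GL (Fin n) ℂ => (g : Matrix (Fin n) (Fin n) ℂ)) '' (G : Set (GL (Fin n) ℂ))))
    (hunitary : ∀ g : GL (Fin n) ℂ,
      (g : Matrix (Fin n) (Fin n) ℂ) ∈ Matrix.unitaryGroup (Fin n) ℂ → g ∈ G) :
    ∀ g : GL (Fin n) ℂ,
      g ∈ G ↔ (g : Matrix (Fin n) (Fin n) ℂ) ∈ Matrix.unitaryGroup (Fin n) ℂ := by
  intro g
  refine ⟨fun hg => ?_, fun h => hunitary g h⟩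
  set M : Matrix (Fin n) (Fin n) ℂ := (g : Matrix (Fin n) (Fin n) ℂ) with hMdef
  have hA : (Mᴴ * M).IsHermitian := isHermitian_conjTranspose_mul_self M
  set V : Matrix (Fin n) (Fin n) ℂ := (hA.eigenvectorUnitary : Matrix (Fin n) (Fin n) ℂ) with hVdef
  have hVmem : V ∈ Matrix.unitaryGroup (Fin n) ℂ := hA.eigenvectorUnitary.2
  set ev : Fin n → ℝ := hA.eigenvalues with hevdef
  have hev_nonneg : ∀ i, 0 ≤ ev i := eigenvalues_conjTranspose_mul_self_nonneg M
  have hdet : (Mᴴ * M).det ≠ 0 := by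
    have hu : IsUnit M.det := (isUnit_iff_isUnit_det M).mp g.isUnit
    rw [det_mul, det_conjTranspose]
    exact mul_ne_zero (star_ne_zero.mpr hu.ne_zero) hu.ne_zero
  have hev_pos : ∀ i, 0 < ev i := by
    intro i
    rcases (hev_nonneg i).lt_or_eq with h | h
    · exact h
    · exfalso
      apply hdet
      rw [hA.det_eq_prod_eigenvalues]
      refine Finset.prod_eq_zero (Finset.mem_univ i) ?_
      have h4 : hA.eigenvalues i = 0 := h.symm
      rw [h4]
      simp
  set μ : Fin n → ℝ := fun i => Real.sqrt (ev i) with hμdef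
  have hμ_pos : ∀ i, 0 < μ i := fun i => Real.sqrt_pos.mpr (hev_pos i)
  have hμ_sq : ∀ i, μ i * μ i = ev i := fun i => Real.mul_self_sqrt (hev_nonneg i)
  set D : Matrix (Fin n) (Fin n) ℂ := diagonal (fun i => (μ i : ℂ)) with hDdef
  set E : Matrix (Fin n) (Fin n) ℂ := diagonal (fun i => ((μ i : ℂ))⁻¹) with hEdef
  have hμC : ∀ i, (μ i : ℂ) ≠ 0 := fun i => by exact_mod_cast (hμ_pos i).ne'
  have hED : E * D = 1 := by
    rw [hEdef, hDdef, diagonal_mul_diagonal]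
    have h2 : (fun i => ((μ i : ℂ))⁻¹ * (μ i : ℂ)) = fun _ : Fin n => (1 : ℂ) :=
      funext fun i => inv_mul_cancel₀ (hμC i)
    rw [h2, diagonal_one]
  have hDE : D * E = 1 := by
    rw [hDdef, hEdef, diagonal_mul_diagonal]
    have h2 : (fun i => (μ i : ℂ) * ((μ i : ℂ))⁻¹) = fun _ : Fin n => (1 : ℂ) :=
      funext fun i => mul_inv_cancel₀ (hμC i)
    rw [h2, diagonal_one]
  have hstarE : star E = E := by
    rw [hEdef, star_eq_conjTranspose, diagonal_conjTranspose]
    have h2 : star (fun i => ((μ i : ℂ))⁻¹) = fun i => ((μ i : ℂ))⁻¹ := by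
      funext i
      simp [Pi.star_apply, Complex.conj_ofReal]
    rw [h2]
  have hVAV : star V * (Mᴴ * M) * V = diagonal (fun i => (ev i : ℂ)) := by
    have := hA.conjStarAlgAut_star_eigenvectorUnitary
    simp only [Unitary.conjStarAlgAut_star_apply, Unitary.coe_star] at this
    exact this
  set u : Matrix (Fin n) (Fin n) ℂ := M * V * E with hudef
  have huu : star u * u = 1 := by
    have h1 : star u * u = E * (star V * (Mᴴ * M) * V) * E := by
      rw [hudef, Matrix.star_mul, Matrix.star_mul, hstarE, star_eq_conjTranspose M]
      noncomm_ring
    rw [h1, hVAV, hEdef, diagonal_mul_diagonal, diagonal_mul_diagonal]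
    have h2 : (fun i => ((μ i : ℂ))⁻¹ * (ev i : ℂ) * ((μ i : ℂ))⁻¹) = fun _ : Fin n => (1 : ℂ) := by
      funext i
      have h3 : (ev i : ℂ) = (μ i : ℂ) * (μ i : ℂ) := by exact_mod_cast (hμ_sq i).symm
      rw [h3]
      field_simp
      exact div_self (hμC i)
    rw [h2, diagonal_one]
  have humem : u ∈ Matrix.unitaryGroup (Fin n) ℂ := mem_unitaryGroup_iff'.mpr huu
  have hVV : V * star V = 1 := mem_unitaryGroup_iff.mp hVmem
  have hVV' : star V * V = 1 := mem_unitaryGroup_iff'.mp hVmem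
  have hg_eq : M = u * D * star V := by
    rw [hudef]
    calc M = M * V * star V := by rw [mul_assoc, hVV, mul_one]
    _ = M * V * (E * D) * star V := by rw [hED, mul_one]
    _ = M * V * E * D * star V := by noncomm_ring
  -- GL elements
  set U1 : GL (Fin n) ℂ := Unitary.toUnits ⟨u, humem⟩ with hU1def
  set V1 : GL (Fin n) ℂ := Unitary.toUnits ⟨V, hVmem⟩ with hV1def
  have hU1coe : (U1 : Matrix (Fin n) (Fin n) ℂ) = u := rfl
  have hV1coe : (V1 : Matrix (Fin n) (Fin n) ℂ) = V := rfl
  have hU1G : U1 ∈ G := hunitary U1 (by rw [hU1coe]; exact humem)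
  have hV1G : V1 ∈ G := hunitary V1 (by rw [hV1coe]; exact hVmem)
  have hU1inv : ((U1⁻¹ : GL (Fin n) ℂ) : Matrix (Fin n) (Fin n) ℂ) = star u := rfl
  set DGL : GL (Fin n) ℂ := U1⁻¹ * g * V1 with hDGLdef
  have hDGLcoe : (DGL : Matrix (Fin n) (Fin n) ℂ) = D := by
    have : (DGL : Matrix (Fin n) (Fin n) ℂ) = star u * M * V := by
      rw [hDGLdef, Units.val_mul, Units.val_mul, hU1inv, hV1coe, hMdef]
    rw [this, hg_eq]
    calc star u * (u * D * star V) * V = (star u * u) * D * (star V * V) := by noncomm_ring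
    _ = D := by rw [huu, hVV', one_mul, mul_one]
  have hDGLG : DGL ∈ G := mul_mem (mul_mem (inv_mem hU1G) hg) hV1G
  -- boundedness of entries over G
  have hb : ∀ i : Fin n, ∃ C : ℝ, ∀ h : GL (Fin n) ℂ, h ∈ G →
      ‖(h : Matrix (Fin n) (Fin n) ℂ) i i‖ ≤ C := by
    intro i
    have hc : IsCompact ((fun m : Matrix (Fin n) (Fin n) ℂ => m i i) ''
        ((fun g : GL (Fin n) ℂ => (g : Matrix (Fin n) (Fin n) ℂ)) '' (G : Set (GL (Fin n) ℂ)))) :=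
      hcompact.image (continuous_id.matrix_elem i i)
    obtain ⟨C, hC⟩ := isBounded_iff_forall_norm_le.mp hc.isBounded
    exact ⟨C, fun h hh => hC _ (Set.mem_image_of_mem _ (Set.mem_image_of_mem _ hh))⟩
  have hμ1 : ∀ i, μ i = 1 := by
    intro i
    by_contra hne
    obtain ⟨C, hC⟩ := hb i
    have key : ∀ ρ : ℝ, 1 < ρ → ∀ (h : GL (Fin n) ℂ), h ∈ G → ∀ w : Fin n → ℂ,
        (h : Matrix (Fin n) (Fin n) ℂ) = diagonal w → w i = (ρ : ℂ) → False := by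
      intro ρ hρ h hhG w hcoe hwi
      obtain ⟨k, hk⟩ := pow_unbounded_of_one_lt C hρ
      have hb2 := hC (h ^ k) (pow_mem hhG k)
      rw [Units.val_pow_eq_pow_val, hcoe, diagonal_pow, diagonal_apply_eq, Pi.pow_apply, hwi,
        ← Complex.ofReal_pow, Complex.norm_real, Real.norm_eq_abs,
        abs_of_pos (pow_pos (lt_trans one_pos hρ) k)] at hb2
      exact absurd hb2 (not_le.mpr hk)
    rcases lt_or_gt_of_ne hne with hlt | hgt
    · -- μ i < 1 : use DGL⁻¹
      have hEcoe : ((DGL⁻¹ : GL (Fin n) ℂ) : Matrix (Fin n) (Fin n) ℂ) = E := by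
        rw [Matrix.coe_units_inv, hDGLcoe, Matrix.inv_eq_left_inv hED]
      refine key (μ i)⁻¹ ((one_lt_inv₀ (hμ_pos i)).mpr hlt) DGL⁻¹ (inv_mem hDGLG)
        (fun j => ((μ j : ℂ))⁻¹) hEcoe ?_
      push_cast
      rfl
    · exact key (μ i) hgt DGL hDGLG (fun j => (μ j : ℂ)) hDGLcoe rfl
  have hD1 : D = 1 := by
    rw [hDdef]
    have h2 : (fun i => ((μ i : ℝ) : ℂ)) = fun _ : Fin n => (1 : ℂ) := by
      funext i
      rw [hμ1 i]
      norm_num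
    rw [h2, diagonal_one]
  rw [hg_eq, hD1, mul_one]
  exact mul_mem humem (Unitary.star_mem hVmem)
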